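/- Let s > 0, let P satisfy H1, and fix x₀ > 0. If γ₁ and γ₂ are two positive solutions of the Dyson–Schwinger ODE on [x₀, ∞) with γ₂(x₀) < γ₁(x₀), then there exists a constant C₁ > 0 such that γ₁(x) − γ₂(x) ≥ C₁·x^{1/s} for all x ≥ x₀; in particular γ₁(x) ≥ C₁·x^{1/s} for all x ≥ x₀, so any global positive solution lying strictly above another global positive solution grows at least like x^{1/s}. -/

import Mathlib

open Real MeasureTheory Filter Set

noncomputable section

/-- `γ` is a positive solution of the Dyson–Schwinger ODE
`γ'(x) = (γ(x) + γ(x)² − P(x)) / (s·x·γ(x))` on the set `I`. -/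
def IsDSSolution (s : ℝ) (P γ : ℝ → ℝ) (I : Set ℝ) : Prop :=
  (∀ x ∈ I, 0 < γ x) ∧
    ∀ x ∈ I, HasDerivWithinAt γ ((γ x + (γ x) ^ 2 - P x) / (s * x * γ x)) I x

/-- Hypothesis H1: `P` is twice continuously differentiable on `[0,∞)`,
`P 0 = 0`, and `P x > 0` for `x > 0`. -/
def H1 (P : ℝ → ℝ) : Prop :=
  ContDiffOn ℝ 2 P (Set.Ici 0) ∧ P 0 = 0 ∧ ∀ x > (0 : ℝ), 0 < P x

/-- Hypothesis H2: `P` is strictly increasing on `[0,∞)`. -/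
def H2 (P : ℝ → ℝ) : Prop := StrictMonoOn P (Set.Ici 0)

/-- The nullcline `γ_c(x) = (√(1 + 4 P x) − 1)/2`. -/
def gammaC (P : ℝ → ℝ) (x : ℝ) : ℝ := (Real.sqrt (1 + 4 * P x) - 1) / 2

theorem stmt_14 (s : ℝ) (hs : 0 < s) (P : ℝ → ℝ) (hP : H1 P)
    (x₀ : ℝ) (hx₀ : 0 < x₀) (γ₁ γ₂ : ℝ → ℝ)
    (hγ₁ : IsDSSolution s P γ₁ (Set.Ici x₀))
    (hγ₂ : IsDSSolution s P γ₂ (Set.Ici x₀))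
    (hlt : γ₂ x₀ < γ₁ x₀) :
    ∃ C₁ > (0 : ℝ), ∀ x ≥ x₀,
      C₁ * x ^ (1 / s) ≤ γ₁ x - γ₂ x ∧ C₁ * x ^ (1 / s) ≤ γ₁ x := by
  set δ : ℝ → ℝ := fun x => γ₁ x - γ₂ x with hδ
  set v : ℝ → ℝ := fun x => δ x * x ^ (-(1/s)) with hv
  have hδ0 : 0 < δ x₀ := sub_pos.2 hlt
  -- derivative of v
  have hvderiv : ∀ x ∈ Ici x₀, HasDerivWithinAt v
      (δ x * P x / (s * x * (γ₁ x * γ₂ x)) * x ^ (-(1/s))) (Ici x₀) x := by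
    intro x hx
    have hx0 : (0:ℝ) < x := lt_of_lt_of_le hx₀ hx
    have hg1 := hγ₁.1 x hx
    have hg2 := hγ₂.1 x hx
    have h1 := (hγ₁.2 x hx).sub (hγ₂.2 x hx)
    have h2 : HasDerivWithinAt (fun y : ℝ => y ^ (-(1/s)))
        ((-(1/s)) * x ^ (-(1/s) - 1)) (Ici x₀) x :=
      (Real.hasDerivAt_rpow_const (Or.inl hx0.ne')).hasDerivWithinAt
    have h := h1.mul h2
    convert h using 1
    · rfl
    · rfl
    · rfl
    have hxpow : x ^ (-(1/s) - 1) = x ^ (-(1/s)) / x := by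
      rw [Real.rpow_sub hx0, Real.rpow_one]
    rw [hxpow]
    field_simp
    simp only [hδ, Pi.sub_apply]
    ring
  have hvcont : ContinuousOn v (Ici x₀) := fun x hx => (hvderiv x hx).continuousWithinAt
  have hδcont : ContinuousOn δ (Ici x₀) := fun x hx =>
    ((hγ₁.2 x hx).sub (hγ₂.2 x hx)).continuousWithinAt
  -- monotonicity helper
  have hmono : ∀ b, x₀ ≤ b → (∀ t ∈ Icc x₀ b, 0 ≤ δ t) → v x₀ ≤ v b := by
    intro b hb hnn
    have hIcc : Icc x₀ b ⊆ Ici x₀ := Icc_subset_Ici_self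
    have hM : MonotoneOn v (Icc x₀ b) := by
      apply monotoneOn_of_hasDerivWithinAt_nonneg (convex_Icc x₀ b) (hvcont.mono hIcc)
        (f' := fun x => δ x * P x / (s * x * (γ₁ x * γ₂ x)) * x ^ (-(1/s)))
      · intro x hx
        rw [interior_Icc] at hx
        rw [interior_Icc]
        exact (hvderiv x (hIcc (Ioo_subset_Icc_self hx))).mono
          (Ioo_subset_Icc_self.trans hIcc)
      · intro x hx
        rw [interior_Icc] at hx
        have hx0 : (0:ℝ) < x := lt_of_lt_of_le hx₀ hx.1.le
        have hg1 := hγ₁.1 x (hIcc (Ioo_subset_Icc_self hx))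
        have hg2 := hγ₂.1 x (hIcc (Ioo_subset_Icc_self hx))
        have hPx := hP.2.2 x hx0
        have hδx := hnn x (Ioo_subset_Icc_self hx)
        have : (0:ℝ) ≤ δ x * P x / (s * x * (γ₁ x * γ₂ x)) :=
          div_nonneg (mul_nonneg hδx hPx.le)
            (by positivity)
        exact mul_nonneg this (Real.rpow_nonneg hx0.le _)
    exact hM (left_mem_Icc.2 hb) (right_mem_Icc.2 hb) hb
  have hvx₀ : 0 < v x₀ := mul_pos hδ0 (Real.rpow_pos_of_pos hx₀ _)
  -- positivity of δ
  have hpos : ∀ x ∈ Ici x₀, 0 < δ x := by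
    by_contra h
    push_neg at h
    obtain ⟨z, hz, hzle⟩ := h
    have hcz : ContinuousOn δ (Icc x₀ z) := hδcont.mono Icc_subset_Ici_self
    have hIVT := intermediate_value_Icc' hz hcz
    obtain ⟨c₀, hc₀mem, hc₀⟩ := hIVT ⟨hzle, hδ0.le⟩
    set Z : Set ℝ := Icc x₀ z ∩ δ ⁻¹' {0} with hZ
    have hZne : Z.Nonempty := ⟨c₀, hc₀mem, hc₀⟩
    have hZbdd : BddBelow Z := ⟨x₀, fun t ht => ht.1.1⟩
    have hZclosed : IsClosed Z :=
      hcz.preimage_isClosed_of_isClosed isClosed_Icc isClosed_singleton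
    set c := sInf Z with hc
    have hcZ : c ∈ Z := hZclosed.csInf_mem hZne hZbdd
    have hδc : δ c = 0 := hcZ.2
    have hnn : ∀ t ∈ Icc x₀ c, 0 ≤ δ t := by
      intro t ht
      by_contra hneg
      push_neg at hneg
      have hct : ContinuousOn δ (Icc x₀ t) := hδcont.mono Icc_subset_Ici_self
      obtain ⟨w, hwmem, hw⟩ := intermediate_value_Icc' ht.1 hct ⟨hneg.le, hδ0.le⟩
      have hwZ : w ∈ Z := ⟨⟨hwmem.1, hwmem.2.trans (ht.2.trans hcZ.1.2)⟩, hw⟩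
      have hcw : c ≤ w := csInf_le hZbdd hwZ
      have : w = t := le_antisymm hwmem.2 (ht.2.trans hcw)
      rw [this] at hw
      linarith
    have hvc := hmono c hcZ.1.1 hnn
    have : v c = 0 := by simp [hv, hδc]
    linarith
  refine ⟨v x₀, hvx₀, fun x hx => ?_⟩
  have hx0 : (0:ℝ) < x := lt_of_lt_of_le hx₀ hx
  have hvx : v x₀ ≤ v x := hmono x hx (fun t ht => (hpos t ht.1).le)
  have hcancel : x ^ (-(1/s)) * x ^ (1/s) = 1 := by
    rw [← Real.rpow_add hx0]; simp
  have h1 : v x₀ * x ^ (1/s) ≤ δ x := by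
    calc v x₀ * x ^ (1/s) ≤ v x * x ^ (1/s) :=
          mul_le_mul_of_nonneg_right hvx (Real.rpow_nonneg hx0.le _)
      _ = δ x := by rw [hv]; simp only; rw [mul_assoc, hcancel, mul_one]
  exact ⟨h1, h1.trans (by have := hγ₂.1 x hx; simp only [hδ]; linarith)⟩
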